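/- Let X be a real n×p matrix with rank(X) = p, X† = (XᵀX)⁻¹Xᵀ, S ∈ ℝ^{r×n} with p ≤ r ≤ n, (SX)† the Moore–Penrose inverse of SX, P = X(SX)†S, and P_X = X(XᵀX)⁻¹Xᵀ. Let y ∈ ℝⁿ, β̂ = X†y, and β̃ = (SX)†Sy. If β̂ ≠ 0, then ‖β̃ − β̂‖₂ / ‖β̂‖₂ ≤ κ₂(X) · (‖y‖₂ / (‖X‖₂‖β̂‖₂)) · ‖P − P_X‖₂, where κ₂(X) = ‖X‖₂‖X†‖₂ and ‖·‖₂ denotes the spectral (Euclidean operator) norm for matrices and the Euclidean norm for vectors. If moreover P_X y ≠ 0, then ‖y‖₂/(‖X‖₂‖β̂‖₂) ≤ ‖y‖₂/‖P_X y‖₂, so ‖β̃ − β̂‖₂ / ‖β̂‖₂ ≤ κ₂(X) ‖P − P_X‖₂ · ‖y‖₂/‖P_X y‖₂. -/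

import Mathlib

open Matrix

/-- The Euclidean norm of a vector in `Fin k → ℝ`. -/
noncomputable def vecEnorm {k : ℕ} (v : Fin k → ℝ) : ℝ :=
  ‖(WithLp.equiv 2 (Fin k → ℝ)).symm v‖

/-- The spectral (Euclidean operator) norm of a real matrix. -/
noncomputable def specNorm {a b : ℕ} (M : Matrix (Fin a) (Fin b) ℝ) : ℝ :=
  ‖LinearMap.toContinuousLinearMap (Matrix.toEuclideanLin M)‖

lemma specNorm_nonneg {a b : ℕ} (M : Matrix (Fin a) (Fin b) ℝ) : 0 ≤ specNorm M :=
  norm_nonneg _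

open scoped Matrix.Norms.L2Operator in
lemma vecEnorm_mulVec_le {a b : ℕ} (M : Matrix (Fin a) (Fin b) ℝ) (v : Fin b → ℝ) :
    vecEnorm (M *ᵥ v) ≤ specNorm M * vecEnorm v :=
  M.l2_opNorm_mulVec ((WithLp.equiv 2 (Fin b → ℝ)).symm v)

lemma specNorm_eq_zero_iff {a b : ℕ} (M : Matrix (Fin a) (Fin b) ℝ) :
    specNorm M = 0 ↔ M = 0 := by
  rw [specNorm, norm_eq_zero, LinearEquiv.map_eq_zero_iff, LinearEquiv.map_eq_zero_iff]

lemma vecEnorm_eq_zero_iff {k : ℕ} (v : Fin k → ℝ) : vecEnorm v = 0 ↔ v = 0 := by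
  rw [vecEnorm, norm_eq_zero]
  constructor
  · intro h
    simpa using congrArg (WithLp.equiv 2 (Fin k → ℝ)) h
  · rintro rfl
    exact WithLp.toLp_zero _

lemma vecEnorm_nonneg {k : ℕ} (v : Fin k → ℝ) : 0 ≤ vecEnorm v := norm_nonneg _

lemma vecEnorm_pos_of_ne_zero {k : ℕ} {v : Fin k → ℝ} (h : v ≠ 0) : 0 < vecEnorm v :=
  lt_of_le_of_ne (vecEnorm_nonneg v) (fun h0 => h ((vecEnorm_eq_zero_iff v).mp h0.symm))

/-- Corollary 2, solution bound: relative error bounds for the sketched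
solution `β̃ = (SX)† S y` with respect to the exact solution `β̂ = X† y`. -/
theorem sketched_solution_relative_error_bound
    {n p r : ℕ} (X : Matrix (Fin n) (Fin p) ℝ) (hX : X.rank = p)
    (S : Matrix (Fin r) (Fin n) ℝ) (hpr : p ≤ r) (hrn : r ≤ n)
    (Y : Matrix (Fin p) (Fin r) ℝ)
    (hp1 : (S * X) * Y * (S * X) = S * X)
    (hp2 : Y * ((S * X) * Y) = Y)
    (hp3 : ((S * X) * Y)ᵀ = (S * X) * Y)
    (hp4 : (Y * (S * X))ᵀ = Y * (S * X))
    (y : Fin n → ℝ)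
    (Xd : Matrix (Fin p) (Fin n) ℝ) (hXd : Xd = (Xᵀ * X)⁻¹ * Xᵀ)
    (P : Matrix (Fin n) (Fin n) ℝ) (hP : P = X * Y * S)
    (PX : Matrix (Fin n) (Fin n) ℝ) (hPX : PX = X * (Xᵀ * X)⁻¹ * Xᵀ)
    (betahat : Fin p → ℝ) (hbetahat : betahat = Xd *ᵥ y)
    (betatilde : Fin p → ℝ) (hbetatilde : betatilde = Y *ᵥ (S *ᵥ y))
    (hne : betahat ≠ 0) :
    vecEnorm (betatilde - betahat) / vecEnorm betahat ≤
      (specNorm X * specNorm Xd) * (vecEnorm y / (specNorm X * vecEnorm betahat)) *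
        specNorm (P - PX) ∧
    (PX *ᵥ y ≠ 0 →
      vecEnorm y / (specNorm X * vecEnorm betahat) ≤ vecEnorm y / vecEnorm (PX *ᵥ y) ∧
      vecEnorm (betatilde - betahat) / vecEnorm betahat ≤
        (specNorm X * specNorm Xd) * specNorm (P - PX) *
          (vecEnorm y / vecEnorm (PX *ᵥ y))) := by
  -- `p ≠ 0`
  have hp0 : p ≠ 0 := by
    rintro rfl
    exact hne (Subsingleton.elim _ _)
  -- `Xᵀ * X` is invertible
  have hA : IsUnit (Xᵀ * X) := by
    have h1 : (Xᵀ * X).rank = p := by rw [Matrix.rank_transpose_mul_self, hX]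
    rw [Matrix.rank] at h1
    have htop : LinearMap.range (Xᵀ * X).mulVecLin = ⊤ := by
      apply Submodule.eq_top_of_finrank_eq
      simp [h1]
    exact Matrix.mulVec_surjective_iff_isUnit.mp
      (fun v => by
        obtain ⟨w, hw⟩ := LinearMap.range_eq_top.mp htop v
        exact ⟨w, hw⟩)
  have hdet : IsUnit (Xᵀ * X).det := (Matrix.isUnit_iff_isUnit_det _).mp hA
  have hXdX : Xd * X = 1 := by
    rw [hXd, Matrix.mul_assoc, Matrix.nonsing_inv_mul _ hdet]
  have hPXeq : PX = X * Xd := by rw [hPX, hXd, Matrix.mul_assoc]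
  -- key identity : betatilde - betahat = Xd *ᵥ ((P - PX) *ᵥ y)
  have hkey : betatilde - betahat = Xd *ᵥ ((P - PX) *ᵥ y) := by
    have h1 : Xd * (P - PX) = Y * S - Xd := by
      rw [Matrix.mul_sub, hP, hPXeq]
      have e1 : Xd * (X * Y * S) = Y * S := by
        rw [show X * Y * S = X * (Y * S) by rw [Matrix.mul_assoc],
          ← Matrix.mul_assoc, hXdX, Matrix.one_mul]
      have e2 : Xd * (X * Xd) = Xd := by
        rw [← Matrix.mul_assoc, hXdX, Matrix.one_mul]
      rw [e1, e2]
    rw [Matrix.mulVec_mulVec, h1, Matrix.sub_mulVec, hbetatilde, hbetahat,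
      ← Matrix.mulVec_mulVec]
  -- norms
  set a := vecEnorm (betatilde - betahat) with ha
  set b := vecEnorm betahat with hb
  set c := specNorm Xd with hc
  set d := specNorm (P - PX) with hd
  set e := vecEnorm y with he
  set x := specNorm X with hx
  have hbpos : 0 < b := vecEnorm_pos_of_ne_zero hne
  have hxpos : 0 < x := by
    rcases lt_or_eq_of_le (specNorm_nonneg X) with h | h
    · exact h
    · exfalso
      have : X = 0 := (specNorm_eq_zero_iff X).mp h.symm
      rw [this, Matrix.rank_zero] at hX
      exact hp0 hX.symm
  have hcnn : 0 ≤ c := specNorm_nonneg _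
  have hdnn : 0 ≤ d := specNorm_nonneg _
  have henn : 0 ≤ e := vecEnorm_nonneg _
  have hkey2 : a ≤ c * (d * e) := by
    rw [ha, hkey]
    calc vecEnorm (Xd *ᵥ ((P - PX) *ᵥ y)) ≤ c * vecEnorm ((P - PX) *ᵥ y) :=
          vecEnorm_mulVec_le _ _
      _ ≤ c * (d * e) := by
          apply mul_le_mul_of_nonneg_left (vecEnorm_mulVec_le _ _) hcnn
  have goal1 : a / b ≤ (x * c) * (e / (x * b)) * d := by
    have hRHS : (x * c) * (e / (x * b)) * d = (c * (d * e)) / b := by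
      field_simp
    rw [hRHS, div_le_div_iff₀ hbpos hbpos]
    nlinarith [hkey2]
  refine ⟨goal1, fun hPXy => ?_⟩
  have hgpos : 0 < vecEnorm (PX *ᵥ y) := vecEnorm_pos_of_ne_zero hPXy
  have hgle : vecEnorm (PX *ᵥ y) ≤ x * b := by
    have : PX *ᵥ y = X *ᵥ betahat := by
      rw [hPXeq, ← Matrix.mulVec_mulVec, hbetahat]
    rw [this]
    exact vecEnorm_mulVec_le _ _
  have goal2 : e / (x * b) ≤ e / vecEnorm (PX *ᵥ y) :=
    div_le_div_of_nonneg_left henn hgpos hgle |>.trans_eq rfl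
  refine ⟨goal2, ?_⟩
  calc a / b ≤ (x * c) * (e / (x * b)) * d := goal1
    _ ≤ (x * c) * d * (e / vecEnorm (PX *ᵥ y)) := by
        have h1 : (x * c) * (e / (x * b)) * d = (x * c) * d * (e / (x * b)) := by ring
        rw [h1]
        apply mul_le_mul_of_nonneg_left goal2
        positivity
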